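/- Let J be a nonempty finite set, let u ∈ ℤ^J, and let A₁ < A₂ be real numbers. Let φ be a holomorphic function on the open strip { z ∈ ℂ^J : A₁ < Re(z_j) < A₂ for all j ∈ J }, and suppose that for every compact set K ⊆ (A₁, A₂) there exist constants A ≥ 0 and C > 0 such that |φ(z + i t u)| ≤ C · (1 + ‖z‖)^A · (1 + t²)^{−1} whenever Re(z_j) ∈ K for all j ∈ J and t ∈ ℝ. Then: (i) for every such z the integral ψ(z) := (2π)^{−1} ∫_ℝ φ(z + i t u) dt converges absolutely; (ii) ψ is holomorphic on the same open strip; (iii) ψ is polynomially bounded in vertical strips, i.e. for every compact K ⊆ (A₁, A₂) there exist A′ ≥ 0 and C′ > 0 with |ψ(z)| ≤ C′ · (1 + ‖z‖)^{A′} whenever Re(z_j) ∈ K for all j; and (iv) ψ is invariant under translation by ℂ·u, i.e. ψ(z + s u) = ψ(z) for every s ∈ ℂ such that both Re(z_j) and Re(z_j + s u_j) lie in (A₁, A₂) for all j ∈ J. -/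

import Mathlib

open MeasureTheory

/-- The open vertical strip `{z ∈ ℂ^J : A₁ < Re z_j < A₂ for all j}`. -/
def strip {J : Type*} (A₁ A₂ : ℝ) : Set (J → ℂ) :=
  {z | ∀ j, (z j).re ∈ Set.Ioo A₁ A₂}

/-- The shifted integral `ψ(z) := (2π)⁻¹ ∫_ℝ φ(z + i t u) dt`. -/
noncomputable def shiftedIntegral {J : Type*} [Fintype J] (u : J → ℤ)
    (φ : (J → ℂ) → ℂ) (z : J → ℂ) : ℂ :=
  (2 * Real.pi : ℝ)⁻¹ * ∫ t : ℝ, φ (fun j => z j + (t : ℂ) * (u j : ℂ) * Complex.I)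

section Helpers

open Metric Set Complex Filter

/-- Cauchy-type estimate for the Fréchet derivative of a holomorphic function
bounded on a ball, via the one-dimensional Schwarz lemma. -/
lemma cauchy_est {E : Type*} [NormedAddCommGroup E] [NormedSpace ℂ E]
    (φ : E → ℂ) {c : E} {r M : ℝ} (hr : 0 < r) (hM : 0 < M)
    (hd : ∀ w ∈ ball c r, DifferentiableAt ℂ φ w)
    (hb : ∀ w ∈ ball c r, ‖φ w‖ ≤ M) :
    ‖fderiv ℂ φ c‖ ≤ 3 * M / r := by
  have hD : DifferentiableAt ℂ φ c := hd c (mem_ball_self hr)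
  refine (fderiv ℂ φ c).opNorm_le_bound (by positivity) fun v => ?_
  rcases eq_or_ne v 0 with rfl | hv
  · simp [div_nonneg, hM.le, hr.le, mul_nonneg]
  have hvn : 0 < ‖v‖ := norm_pos_iff.mpr hv
  set g : ℂ → ℂ := fun w => φ (c + w • v) with hg
  set R : ℝ := r / ‖v‖ with hR
  have hR0 : 0 < R := div_pos hr hvn
  have hmem : ∀ w : ℂ, w ∈ ball (0:ℂ) R → c + w • v ∈ ball c r := by
    intro w hw
    simp only [mem_ball, dist_zero_right] at hw
    have : ‖w • v‖ < r := by
      rw [norm_smul]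
      calc ‖w‖ * ‖v‖ < R * ‖v‖ := by gcongr
        _ = r := div_mul_cancel₀ r hvn.ne'
    simpa [mem_ball, dist_eq_norm, add_sub_cancel_left] using this
  have hgd : DifferentiableOn ℂ g (ball (0:ℂ) R) := by
    intro w hw
    have h1 : DifferentiableAt ℂ φ (c + w • v) := hd _ (hmem w hw)
    have h2 : DifferentiableAt ℂ (fun w : ℂ => c + w • v) w :=
      ((differentiableAt_id).smul_const v).const_add c
    exact (h1.comp w h2).differentiableWithinAt
  have hmaps : Set.MapsTo g (ball (0:ℂ) R) (ball (g 0) (3*M)) := by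
    intro w hw
    have h1 := hb _ (hmem w hw)
    have h2 : ‖g 0‖ ≤ M := by
      simpa [hg] using hb c (mem_ball_self hr)
    simp only [mem_ball]
    calc dist (g w) (g 0) ≤ ‖g w‖ + ‖g 0‖ := dist_le_norm_add_norm _ _
      _ ≤ M + M := add_le_add h1 h2
      _ < 3 * M := by linarith
  have hder : HasDerivAt g (fderiv ℂ φ c v) 0 := by
    have h1 : HasFDerivAt φ (fderiv ℂ φ c) c := hD.hasFDerivAt
    have h2 : HasDerivAt (fun w : ℂ => c + w • v) v 0 := by
      simpa using ((hasDerivAt_id (0:ℂ)).smul_const v).const_add c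
    have h1' : HasFDerivAt φ (fderiv ℂ φ c) (c + (0:ℂ) • v) := by simpa using h1
    exact h1'.comp_hasDerivAt 0 h2
  have hS := Complex.norm_deriv_le_div_of_mapsTo_ball hgd (hmaps.mono_right Metric.ball_subset_closedBall) hR0
  rw [hder.deriv] at hS
  calc ‖fderiv ℂ φ c v‖ ≤ 3*M/R := hS
    _ = 3 * M / r * ‖v‖ := by rw [hR]; field_simp

/-- Shifting a vertical line integral of a holomorphic function with uniform
quadratic decay, via Cauchy's theorem on rectangles. -/
lemma vert_shift (f : ℂ → ℂ) (σ Cb : ℝ)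
    (hd : DifferentiableOn ℂ f {w : ℂ | w.re ∈ Set.uIcc 0 σ})
    (hb : ∀ x ∈ Set.uIcc 0 σ, ∀ t : ℝ, ‖f (x + t * Complex.I)‖ ≤ Cb * (1 + t ^ 2)⁻¹) :
    ∫ t : ℝ, f (σ + t * Complex.I) = ∫ t : ℝ, f (t * Complex.I) := by
  have hix : ∀ x ∈ Set.uIcc 0 σ, Integrable (fun t : ℝ => f (x + t * Complex.I)) := by
    intro x hx
    have hcx : Continuous fun t : ℝ => f (x + t * Complex.I) := by
      apply hd.continuousOn.comp_continuous (by continuity)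
      intro t; simp [hx]
    exact Integrable.mono' (integrable_inv_one_add_sq.const_mul Cb) hcx.aestronglyMeasurable
      (Filter.Eventually.of_forall fun t => hb x hx t)
  have h0m : (0:ℝ) ∈ Set.uIcc 0 σ := Set.left_mem_uIcc
  have hσm : σ ∈ Set.uIcc 0 σ := Set.right_mem_uIcc
  have hrect : ∀ T : ℝ,
      (Complex.I • ∫ y in (-T)..T, f (σ + y * Complex.I))
        - Complex.I • ∫ y in (-T)..T, f (y * Complex.I)
      = (∫ x in (0:ℝ)..σ, f (x + (T:ℝ) * Complex.I))
        - ∫ x in (0:ℝ)..σ, f (x + ((-T : ℝ)) * Complex.I) := by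
    intro T
    have key := Complex.integral_boundary_rect_eq_zero_of_differentiableOn f
      (((-T : ℝ)) * Complex.I) (σ + (T:ℝ) * Complex.I) (by
        apply hd.mono
        intro w hw
        rw [Complex.mem_reProdIm] at hw
        have := hw.1
        simpa using this)
    simp only [Complex.add_re, Complex.add_im, Complex.ofReal_re, Complex.ofReal_im,
      Complex.mul_re, Complex.mul_im, Complex.I_re, Complex.I_im, mul_zero, mul_one,
      zero_mul, sub_zero, zero_add, add_zero, zero_sub, neg_neg, Complex.ofReal_zero] at key
    linear_combination key
  have hten : Tendsto (fun T : ℝ =>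
      (Complex.I • ∫ y in (-T)..T, f (σ + y * Complex.I))
        - Complex.I • ∫ y in (-T)..T, f (y * Complex.I)) atTop
      (nhds ((Complex.I • ∫ t : ℝ, f (σ + t * Complex.I))
        - Complex.I • ∫ t : ℝ, f (t * Complex.I))) := by
    have h1 := intervalIntegral_tendsto_integral (hix σ hσm) tendsto_neg_atTop_atBot tendsto_id
    have h2 := intervalIntegral_tendsto_integral (hix 0 h0m) tendsto_neg_atTop_atBot tendsto_id
    simp only [Complex.ofReal_zero, zero_add] at h2
    exact (h1.const_smul _).sub (h2.const_smul _)
  have hzero : Tendsto (fun T : ℝ =>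
      (∫ x in (0:ℝ)..σ, f (x + (T:ℝ) * Complex.I))
        - ∫ x in (0:ℝ)..σ, f (x + ((-T : ℝ)) * Complex.I)) atTop (nhds 0) := by
    apply squeeze_zero_norm (a := fun T => 2 * Cb * |σ| * (1 + T ^ 2)⁻¹)
    · intro T
      have hb1 : ‖∫ x in (0:ℝ)..σ, f (x + (T:ℝ) * Complex.I)‖ ≤ Cb * (1 + T ^ 2)⁻¹ * |σ - 0| :=
        intervalIntegral.norm_integral_le_of_norm_le_const fun x hx =>
          hb x (Set.uIoc_subset_uIcc hx) T
      have hb2 : ‖∫ x in (0:ℝ)..σ, f (x + ((-T:ℝ)) * Complex.I)‖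
          ≤ Cb * (1 + (-T) ^ 2)⁻¹ * |σ - 0| :=
        intervalIntegral.norm_integral_le_of_norm_le_const fun x hx =>
          hb x (Set.uIoc_subset_uIcc hx) (-T)
      rw [neg_sq] at hb2
      rw [sub_zero] at hb1 hb2
      calc ‖_ - _‖ ≤ _ := norm_sub_le _ _
        _ ≤ Cb * (1 + T ^ 2)⁻¹ * |σ| + Cb * (1 + T ^ 2)⁻¹ * |σ| := add_le_add hb1 hb2
        _ = 2 * Cb * |σ| * (1 + T ^ 2)⁻¹ := by ring
    · have h1 : Tendsto (fun T : ℝ => (1 + T ^ 2)⁻¹) atTop (nhds 0) := by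
        apply Tendsto.inv_tendsto_atTop
        exact tendsto_atTop_add_const_left _ _ (tendsto_pow_atTop two_ne_zero)
      simpa using h1.const_mul (2 * Cb * |σ|)
  have heq : Tendsto (fun T : ℝ =>
      (Complex.I • ∫ y in (-T)..T, f (σ + y * Complex.I))
        - Complex.I • ∫ y in (-T)..T, f (y * Complex.I)) atTop (nhds 0) := by
    simp only [hrect]; exact hzero
  have huniq := tendsto_nhds_unique hten heq
  rw [← smul_sub] at huniq
  exact sub_eq_zero.mp ((smul_eq_zero.mp huniq).resolve_left Complex.I_ne_zero)

/-- A point on the segment between `p` and `p + σ·c` lies in any convex set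
containing the endpoints. -/
lemma mem_convex_aux {S : Set ℝ} (hS : Convex ℝ S) {p c σ x : ℝ}
    (hp : p ∈ S) (hq : p + σ * c ∈ S) (hx : x ∈ Set.uIcc 0 σ) : p + x * c ∈ S := by
  rw [← segment_eq_uIcc] at hx
  obtain ⟨α, β, hα, hβ, hαβ, hs⟩ := hx
  have hmem := hS hp hq hα hβ hαβ
  have hx' : x = β * σ := by simpa [smul_eq_mul] using hs.symm
  have heq : α • p + β • (p + σ * c) = p + x * c := by
    simp only [smul_eq_mul, hx']; linear_combination p * hαβ
  rwa [heq] at hmem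

end Helpers

/-- Basic properties of the shifted integral `ψ = 𝒮(φ)`: absolute convergence,
holomorphy on the strip, polynomial boundedness in vertical strips, and
invariance under translation by `ℂ·u`. -/
theorem stmt_8 {J : Type*} [Fintype J] [Nonempty J] (u : J → ℤ)
    (A₁ A₂ : ℝ) (hA : A₁ < A₂) (φ : (J → ℂ) → ℂ)
    (hφ : DifferentiableOn ℂ φ (strip A₁ A₂))
    (hgrow : ∀ K : Set ℝ, IsCompact K → K ⊆ Set.Ioo A₁ A₂ →
      ∃ A C : ℝ, 0 ≤ A ∧ 0 < C ∧ ∀ (z : J → ℂ) (t : ℝ), (∀ j, (z j).re ∈ K) →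
        ‖φ (fun j => z j + (t : ℂ) * (u j : ℂ) * Complex.I)‖ ≤
          C * (1 + ‖z‖) ^ A * (1 + t ^ 2)⁻¹) :
    (∀ z ∈ strip (J := J) A₁ A₂,
        Integrable (fun t : ℝ =>
          φ (fun j => z j + (t : ℂ) * (u j : ℂ) * Complex.I))) ∧
    DifferentiableOn ℂ (shiftedIntegral u φ) (strip A₁ A₂) ∧
    (∀ K : Set ℝ, IsCompact K → K ⊆ Set.Ioo A₁ A₂ →
      ∃ A' C' : ℝ, 0 ≤ A' ∧ 0 < C' ∧ ∀ z : J → ℂ, (∀ j, (z j).re ∈ K) →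
        ‖shiftedIntegral u φ z‖ ≤ C' * (1 + ‖z‖) ^ A') ∧
    (∀ (z : J → ℂ) (s : ℂ), z ∈ strip (J := J) A₁ A₂ →
      (fun j => z j + s * (u j : ℂ)) ∈ strip (J := J) A₁ A₂ →
      shiftedIntegral u φ (fun j => z j + s * (u j : ℂ)) =
        shiftedIntegral u φ z) := by
  classical
  have huniv : (Finset.univ : Finset J).Nonempty := Finset.univ_nonempty
  -- openness of the strip
  have hopen : IsOpen (strip (J := J) A₁ A₂) := by
    have : strip (J := J) A₁ A₂ =
        ⋂ j, (fun z : J → ℂ => (z j).re) ⁻¹' Set.Ioo A₁ A₂ := by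
      ext z; simp [strip]
    rw [this]
    exact isOpen_iInter_of_finite fun j =>
      isOpen_Ioo.preimage (Complex.continuous_re.comp (continuous_apply j))
  -- continuity of the vertical line maps
  have hline : ∀ z : J → ℂ,
      Continuous fun t : ℝ => (fun j => z j + (t : ℂ) * (u j : ℂ) * Complex.I) := by
    intro z
    refine continuous_pi fun j => ?_
    exact continuous_const.add ((Complex.continuous_ofReal.mul continuous_const).mul
      continuous_const)
  have hlinemem : ∀ z ∈ strip (J := J) A₁ A₂, ∀ t : ℝ,
      (fun j => z j + (t : ℂ) * (u j : ℂ) * Complex.I) ∈ strip (J := J) A₁ A₂ := by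
    intro z hz t j
    have : (z j + (t : ℂ) * (u j : ℂ) * Complex.I).re = (z j).re := by simp
    rw [this]; exact hz j
  have hcont : ∀ z ∈ strip (J := J) A₁ A₂,
      Continuous fun t : ℝ => φ (fun j => z j + (t : ℂ) * (u j : ℂ) * Complex.I) := by
    intro z hz
    exact hφ.continuousOn.comp_continuous (hline z) (hlinemem z hz)
  -- Part 1: integrability
  have part1 : ∀ z ∈ strip (J := J) A₁ A₂,
      Integrable (fun t : ℝ =>
        φ (fun j => z j + (t : ℂ) * (u j : ℂ) * Complex.I)) := by
    intro z hz
    set K : Set ℝ := Set.Icc (Finset.univ.inf' huniv fun j => (z j).re)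
      (Finset.univ.sup' huniv fun j => (z j).re) with hK
    have hKsub : K ⊆ Set.Ioo A₁ A₂ := by
      intro x hx
      constructor
      · exact lt_of_lt_of_le (by rw [Finset.lt_inf'_iff]; exact fun j _ => (hz j).1) hx.1
      · exact lt_of_le_of_lt hx.2 (by rw [Finset.sup'_lt_iff]; exact fun j _ => (hz j).2)
    obtain ⟨A, C, hA0, hC, hbd⟩ := hgrow K isCompact_Icc hKsub
    have hmem : ∀ j, (z j).re ∈ K :=
      fun j => ⟨Finset.inf'_le _ (Finset.mem_univ j), Finset.le_sup' (fun j => (z j).re) (Finset.mem_univ j)⟩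
    refine Integrable.mono' (integrable_inv_one_add_sq.const_mul (C * (1 + ‖z‖) ^ A))
      (hcont z hz).aestronglyMeasurable (Filter.Eventually.of_forall fun t => ?_)
    calc ‖φ (fun j => z j + (t : ℂ) * (u j : ℂ) * Complex.I)‖
        ≤ C * (1 + ‖z‖) ^ A * (1 + t ^ 2)⁻¹ := hbd z t hmem
      _ = C * (1 + ‖z‖) ^ A * (1 + t ^ 2)⁻¹ := rfl
  refine ⟨part1, ?_, ?_, ?_⟩
  · -- Part 2: holomorphy
    intro x₀ hx₀
    set δ : ℝ := Finset.univ.inf' huniv fun j => min ((x₀ j).re - A₁) (A₂ - (x₀ j).re) with hδ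
    have hδpos : 0 < δ := by
      rw [hδ, Finset.lt_inf'_iff]
      exact fun j _ => lt_min (by linarith [(hx₀ j).1]) (by linarith [(hx₀ j).2])
    have hδ1 : ∀ j, δ ≤ (x₀ j).re - A₁ :=
      fun j => le_trans (Finset.inf'_le _ (Finset.mem_univ j)) (min_le_left _ _)
    have hδ2 : ∀ j, δ ≤ A₂ - (x₀ j).re :=
      fun j => le_trans (Finset.inf'_le _ (Finset.mem_univ j)) (min_le_right _ _)
    set m : ℝ := Finset.univ.inf' huniv fun j => (x₀ j).re with hm
    set M : ℝ := Finset.univ.sup' huniv fun j => (x₀ j).re with hM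
    have hKsub : Set.Icc (m - δ/2) (M + δ/2) ⊆ Set.Ioo A₁ A₂ := by
      intro x hx
      constructor
      · have h7 : A₁ + δ/2 < m := by
          rw [hm, Finset.lt_inf'_iff]
          exact fun j _ => by linarith [hδ1 j]
        linarith [hx.1]
      · have h7 : M < A₂ - δ/2 := by
          rw [hM, Finset.sup'_lt_iff]
          exact fun j _ => by linarith [hδ2 j]
        linarith [hx.2]
    obtain ⟨A, C, hA0, hC, hbd⟩ := hgrow (Set.Icc (m - δ/2) (M + δ/2)) isCompact_Icc hKsub
    set ι : ℝ → (J → ℂ) := fun t => fun j => (t : ℂ) * (u j : ℂ) * Complex.I with hι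
    have hιc : Continuous ι :=
      continuous_pi fun j => (Complex.continuous_ofReal.mul continuous_const).mul continuous_const
    have hkey : ∀ (t : ℝ) (w : J → ℂ), ‖w - x₀ - ι t‖ < δ/2 →
        ‖φ w‖ ≤ C * (1 + ‖x₀‖ + δ) ^ A * (1 + t ^ 2)⁻¹ ∧ w ∈ strip (J := J) A₁ A₂ := by
      intro t w hw
      set z' : J → ℂ := w - ι t with hz'
      have hz'd : ‖z' - x₀‖ < δ/2 := by
        have he8 : z' - x₀ = w - x₀ - ι t := by rw [hz']; abel
        rwa [he8]
      have hrecl : ∀ j, |(z' j).re - (x₀ j).re| < δ/2 := by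
        intro j
        calc |(z' j).re - (x₀ j).re| = |((z' - x₀) j).re| := by
              simp [Pi.sub_apply, Complex.sub_re]
          _ ≤ ‖(z' - x₀) j‖ := Complex.abs_re_le_norm _
          _ ≤ ‖z' - x₀‖ := norm_le_pi_norm _ j
          _ < δ/2 := hz'd
      have hz'K : ∀ j, (z' j).re ∈ Set.Icc (m - δ/2) (M + δ/2) := by
        intro j
        have h5 := hrecl j
        rw [abs_lt] at h5
        have hml : m ≤ (x₀ j).re := Finset.inf'_le _ (Finset.mem_univ j)
        have hMl : (x₀ j).re ≤ M := Finset.le_sup' (fun j => (x₀ j).re) (Finset.mem_univ j)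
        exact ⟨by linarith [h5.1], by linarith [h5.2]⟩
      have hweq : w = fun j => z' j + (t : ℂ) * (u j : ℂ) * Complex.I := by
        funext j
        simp only [hz', Pi.sub_apply, hι]
        ring
      have hb1 := hbd z' t hz'K
      rw [← hweq] at hb1
      constructor
      · refine hb1.trans ?_
        have hz'n : ‖z'‖ ≤ ‖x₀‖ + δ := by
          have h8 : ‖z'‖ = ‖x₀ + (z' - x₀)‖ := by rw [add_sub_cancel]
          have h9 : ‖x₀ + (z' - x₀)‖ ≤ ‖x₀‖ + ‖z' - x₀‖ := norm_add_le _ _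
          rw [h8]
          linarith
        have h10 : (1 + ‖z'‖) ^ A ≤ (1 + ‖x₀‖ + δ) ^ A :=
          Real.rpow_le_rpow (by positivity) (by linarith) hA0
        exact mul_le_mul_of_nonneg_right
          (mul_le_mul_of_nonneg_left h10 hC.le) (by positivity)
      · intro j
        have h6 : (w j).re = (z' j).re := by
          rw [hweq]
          simp
        rw [h6]
        exact hKsub (hz'K j)
    have hstripmem : ∀ (t : ℝ), ∀ x ∈ Metric.ball x₀ (δ/4), x + ι t ∈ strip (J := J) A₁ A₂ := by
      intro t x hx
      refine (hkey t (x + ι t) ?_).2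
      have he9 : x + ι t - x₀ - ι t = x - x₀ := by abel
      rw [he9, ← dist_eq_norm]
      rw [Metric.mem_ball] at hx
      linarith
    have hF'le : ∀ (t : ℝ), ∀ x ∈ Metric.ball x₀ (δ/4),
        ‖fderiv ℂ φ (x + ι t)‖ ≤ 3 * (C * (1 + ‖x₀‖ + δ) ^ A) / (δ/4) * (1 + t ^ 2)⁻¹ := by
      intro t x hx
      have hsub : ∀ w ∈ Metric.ball (x + ι t) (δ/4), ‖w - x₀ - ι t‖ < δ/2 := by
        intro w hw
        rw [Metric.mem_ball, dist_eq_norm] at hw hx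
        calc ‖w - x₀ - ι t‖ = ‖(w - (x + ι t)) + (x - x₀)‖ := by congr 1; abel
          _ ≤ ‖w - (x + ι t)‖ + ‖x - x₀‖ := norm_add_le _ _
          _ < δ/4 + δ/4 := add_lt_add hw hx
          _ = δ/2 := by ring
      have hce := cauchy_est φ (show (0:ℝ) < δ/4 by linarith)
        (show (0:ℝ) < C * (1 + ‖x₀‖ + δ) ^ A * (1 + t ^ 2)⁻¹ by positivity)
        (fun w hw => hφ.differentiableAt (hopen.mem_nhds (hkey t w (hsub w hw)).2))
        (fun w hw => (hkey t w (hsub w hw)).1)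
      refine hce.trans (le_of_eq ?_)
      ring
    have hdom : HasFDerivAt (fun x : J → ℂ => ∫ t : ℝ, φ (x + ι t))
        (∫ t : ℝ, fderiv ℂ φ (x₀ + ι t)) x₀ := by
      refine hasFDerivAt_integral_of_dominated_of_fderiv_le (𝕜 := ℂ)
        (F' := fun (x : J → ℂ) (t : ℝ) => fderiv ℂ φ (x + ι t))
        (bound := fun t : ℝ => 3 * (C * (1 + ‖x₀‖ + δ) ^ A) / (δ/4) * (1 + t ^ 2)⁻¹)
        (Metric.ball_mem_nhds x₀ (show (0:ℝ) < δ/4 by linarith)) ?_ ?_ ?_ ?_ ?_ ?_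
      · filter_upwards [Metric.ball_mem_nhds x₀ (show (0:ℝ) < δ/4 by linarith)] with x hx
        exact (hφ.continuousOn.comp_continuous (continuous_const.add hιc)
          (fun t => hstripmem t x hx)).aestronglyMeasurable
      · exact part1 x₀ hx₀
      · exact ((measurable_fderiv ℂ φ).comp
          ((continuous_const.add hιc).measurable)).aestronglyMeasurable
      · exact Filter.Eventually.of_forall fun t x hx => hF'le t x hx
      · have := integrable_inv_one_add_sq.const_mul
          (3 * (C * (1 + ‖x₀‖ + δ) ^ A) / (δ/4))
        exact this
      · refine Filter.Eventually.of_forall fun t x hx => ?_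
        have hmem : x + ι t ∈ strip (J := J) A₁ A₂ := hstripmem t x hx
        have h1 : HasFDerivAt φ (fderiv ℂ φ (x + ι t)) (x + ι t) :=
          (hφ.differentiableAt (hopen.mem_nhds hmem)).hasFDerivAt
        have h2 : HasFDerivAt (fun x : J → ℂ => x + ι t)
            (ContinuousLinearMap.id ℂ (J → ℂ)) x :=
          (hasFDerivAt_id x).add_const (ι t)
        exact h1.comp x h2
    have hda : DifferentiableAt ℂ (shiftedIntegral u φ) x₀ := by
      have h := hdom.differentiableAt.const_mul (Complex.ofReal ((2 * Real.pi)⁻¹))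
      have he : shiftedIntegral u φ =
          fun x : J → ℂ => Complex.ofReal ((2 * Real.pi)⁻¹) * ∫ t : ℝ, φ (x + ι t) := rfl
      rw [he]
      exact h
    exact hda.differentiableWithinAt
  · -- Part 3: polynomial bound
    intro K hKc hKs
    obtain ⟨A, C, hA0, hC, hbd⟩ := hgrow K hKc hKs
    refine ⟨A, C / 2, hA0, by positivity, fun z hzK => ?_⟩
    have hz : z ∈ strip (J := J) A₁ A₂ := fun j => hKs (hzK j)
    have hint := part1 z hz
    have hintb : Integrable (fun t : ℝ => C * (1 + ‖z‖) ^ A * (1 + t ^ 2)⁻¹) := by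
      have := integrable_inv_one_add_sq.const_mul (C * (1 + ‖z‖) ^ A)
      simpa [mul_assoc] using this
    have h1 : ‖∫ t : ℝ, φ (fun j => z j + (t : ℂ) * (u j : ℂ) * Complex.I)‖
        ≤ ∫ t : ℝ, C * (1 + ‖z‖) ^ A * (1 + t ^ 2)⁻¹ :=
      norm_integral_le_of_norm_le hintb (Filter.Eventually.of_forall fun t => hbd z t hzK)
    have h2 : ∫ t : ℝ, C * (1 + ‖z‖) ^ A * (1 + t ^ 2)⁻¹
        = C * (1 + ‖z‖) ^ A * Real.pi := by
      rw [MeasureTheory.integral_const_mul, integral_univ_inv_one_add_sq]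
    rw [shiftedIntegral, norm_mul, Complex.norm_real, Real.norm_eq_abs,
      abs_of_pos (show (0:ℝ) < (2 * Real.pi)⁻¹ by positivity)]
    calc (2 * Real.pi)⁻¹ * ‖∫ t : ℝ, φ (fun j => z j + (t : ℂ) * (u j : ℂ) * Complex.I)‖
        ≤ (2 * Real.pi)⁻¹ * (C * (1 + ‖z‖) ^ A * Real.pi) := by
          rw [← h2]; exact mul_le_mul_of_nonneg_left h1 (by positivity)
      _ = C / 2 * (1 + ‖z‖) ^ A := by
          field_simp
  · -- Part 4: translation invariance
    intro z s hz hzs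
    set σ : ℝ := s.re with hσ
    set τ : ℝ := s.im with hτ
    set f : ℂ → ℂ := fun w => φ (fun j => z j + w * (u j : ℂ)) with hf
    have hres : ∀ j, (z j).re + σ * (u j : ℝ) ∈ Set.Ioo A₁ A₂ := by
      intro j
      have h0 := hzs j
      simpa [Complex.add_re, Complex.mul_re] using h0
    have hmemstrip : ∀ w : ℂ, w.re ∈ Set.uIcc 0 σ →
        (fun j => z j + w * (u j : ℂ)) ∈ strip (J := J) A₁ A₂ := by
      intro w hw j
      have h0 := mem_convex_aux (convex_Ioo A₁ A₂) (hz j) (hres j) hw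
      have h1 : (z j + w * (u j : ℂ)).re = (z j).re + w.re * (u j : ℝ) := by
        simp [Complex.add_re, Complex.mul_re]
      simpa only [h1] using h0
    have hLdiff : ∀ w : ℂ,
        DifferentiableAt ℂ (fun w : ℂ => (fun j => z j + w * (u j : ℂ))) w := by
      intro w
      apply differentiableAt_pi.mpr
      intro j
      exact (differentiableAt_id.mul_const _).const_add _
    have hfd : DifferentiableOn ℂ f {w : ℂ | w.re ∈ Set.uIcc 0 σ} := by
      intro w hw
      exact ((hφ.differentiableAt (hopen.mem_nhds (hmemstrip w hw))).comp w
        (hLdiff w)).differentiableWithinAt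
    set m : ℝ := Finset.univ.inf' huniv
      fun j => min ((z j).re) ((z j).re + σ * (u j : ℝ)) with hm
    set M : ℝ := Finset.univ.sup' huniv
      fun j => max ((z j).re) ((z j).re + σ * (u j : ℝ)) with hM
    have hKsub : Set.Icc m M ⊆ Set.Ioo A₁ A₂ := by
      intro x hx
      constructor
      · refine lt_of_lt_of_le ?_ hx.1
        rw [hm, Finset.lt_inf'_iff]
        exact fun j _ => lt_min (hz j).1 (hres j).1
      · refine lt_of_le_of_lt hx.2 ?_
        rw [hM, Finset.sup'_lt_iff]
        exact fun j _ => max_lt (hz j).2 (hres j).2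
    obtain ⟨A, C, hA0, hC, hbd⟩ := hgrow (Set.Icc m M) isCompact_Icc hKsub
    set Nu : ℝ := ‖(fun j => ((u j : ℂ)) : J → ℂ)‖ with hNu
    have hNu0 : 0 ≤ Nu := norm_nonneg _
    set Cb : ℝ := C * (1 + ‖z‖ + |σ| * Nu) ^ A with hCb
    have hbound : ∀ x ∈ Set.uIcc 0 σ, ∀ t : ℝ,
        ‖f (x + t * Complex.I)‖ ≤ Cb * (1 + t ^ 2)⁻¹ := by
      intro x hx t
      set z' : J → ℂ := fun j => z j + (x : ℂ) * (u j : ℂ) with hz'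
      have hmemK : ∀ j, (z' j).re ∈ Set.Icc m M := by
        intro j
        have h1 : (z j).re ∈ Set.Icc m M :=
          ⟨le_trans (Finset.inf'_le _ (Finset.mem_univ j)) (min_le_left _ _),
           le_trans (le_max_left _ _)
             (Finset.le_sup' (fun j => max ((z j).re) ((z j).re + σ * (u j : ℝ)))
               (Finset.mem_univ j))⟩
        have h2 : (z j).re + σ * (u j : ℝ) ∈ Set.Icc m M :=
          ⟨le_trans (Finset.inf'_le _ (Finset.mem_univ j)) (min_le_right _ _),
           le_trans (le_max_right _ _)
             (Finset.le_sup' (fun j => max ((z j).re) ((z j).re + σ * (u j : ℝ)))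
               (Finset.mem_univ j))⟩
        have h3 := mem_convex_aux (convex_Icc m M) h1 h2 hx
        have h4 : (z' j).re = (z j).re + x * (u j : ℝ) := by
          simp [hz', Complex.add_re, Complex.mul_re]
        rw [h4]
        exact h3
      have hfeq : f ((x : ℂ) + (t : ℂ) * Complex.I)
          = φ (fun j => z' j + (t : ℂ) * (u j : ℂ) * Complex.I) := by
        simp only [hf]
        congr 1
        funext j
        simp only [hz']
        ring
      have hb1 := hbd z' t hmemK
      rw [← hfeq] at hb1
      have hxs : |x| ≤ |σ| := by
        rcases Set.mem_uIcc.mp hx with ⟨h1, h2⟩ | ⟨h1, h2⟩ <;>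
          rw [abs_le] <;> constructor <;> linarith [le_abs_self σ, neg_abs_le σ]
      have hz'n : ‖z'‖ ≤ ‖z‖ + |σ| * Nu := by
        have he : z' = z + (x : ℂ) • (fun j => ((u j : ℂ)) : J → ℂ) := by
          funext j
          simp [hz', smul_eq_mul]
        calc ‖z'‖ ≤ ‖z‖ + ‖(x : ℂ) • (fun j => ((u j : ℂ)) : J → ℂ)‖ := by
              rw [he]; exact norm_add_le _ _
          _ = ‖z‖ + |x| * Nu := by
              rw [norm_smul, Complex.norm_real, Real.norm_eq_abs]
          _ ≤ ‖z‖ + |σ| * Nu := by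
              have := mul_le_mul_of_nonneg_right hxs hNu0
              linarith
      refine hb1.trans ?_
      have h10 : (1 + ‖z'‖) ^ A ≤ (1 + ‖z‖ + |σ| * Nu) ^ A :=
        Real.rpow_le_rpow (by positivity) (by linarith) hA0
      rw [hCb]
      exact mul_le_mul_of_nonneg_right
        (mul_le_mul_of_nonneg_left h10 hC.le) (by positivity)
    have key := vert_shift f σ Cb hfd hbound
    rw [shiftedIntegral, shiftedIntegral]
    congr 1
    have e1 : (fun t : ℝ => φ (fun j => (z j + s * (u j : ℂ)) + (t : ℂ) * (u j : ℂ) * Complex.I))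
        = fun t : ℝ => f ((σ : ℂ) + ((t + τ : ℝ) : ℂ) * Complex.I) := by
      funext t
      simp only [hf]
      congr 1
      funext j
      have hs : s = (σ : ℂ) + (τ : ℂ) * Complex.I := (Complex.re_add_im s).symm
      push_cast
      linear_combination ((u j : ℂ)) * hs
    have e2 : (fun t : ℝ => φ (fun j => z j + (t : ℂ) * (u j : ℂ) * Complex.I))
        = fun t : ℝ => f ((t : ℂ) * Complex.I) := by
      funext t
      simp only [hf]
      congr 1
      funext j
      ring
    rw [e1, e2]
    rw [← key]
    exact MeasureTheory.integral_add_right_eq_self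
      (fun t : ℝ => f ((σ : ℂ) + (t : ℂ) * Complex.I)) τ
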